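/- Let A, Z ∈ {0,1}, W on a finite probability space with 0 < P(Z=1|W) < 1 a.s., δ(W) = E[A|W,Z=1] − E[A|W,Z=0]. Let δ*(W) ≠ 0 and m₀*(W) be arbitrary bounded functions, ε* = A − δ*(W)Z − m₀*(W), and Ψ̃(W) bounded. Then E[ ε* Ψ̃(W) (−1)^{1−Z} / ( P(Z|W) δ*(W) ) | W ] = Ψ̃(W) ( δ(W) − δ*(W) ) / δ*(W) = Ψ̃(W) δ(W)/δ*(W) − Ψ̃(W) almost surely. -/

import Mathlib

open Finset
open scoped Classical BigOperators

noncomputable section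

variable {Ω : Type}

/-- Expectation of `f` under pmf `p` on a finite sample space. -/
def E [Fintype Ω] (p f : Ω → ℝ) : ℝ := ∑ ω, p ω * f ω

/-- Probability of the event `s` under pmf `p`. -/
def Pr [Fintype Ω] (p : Ω → ℝ) (s : Ω → Prop) : ℝ := ∑ ω, if s ω then p ω else 0

/-- Conditional expectation of `f` given the event `s`. -/
def CE [Fintype Ω] (p f : Ω → ℝ) (s : Ω → Prop) : ℝ :=
  (∑ ω, if s ω then p ω * f ω else 0) / Pr p s

/-- The realized instrument propensity P(Z = Z(ω) | W = W(ω)). -/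
def PZ {β : Type} [Fintype Ω] (p : Ω → ℝ) (W : Ω → β) (Z : Ω → ℝ) (ω : Ω) : ℝ :=
  Pr p (fun ω' => W ω' = W ω ∧ Z ω' = Z ω) / Pr p (fun ω' => W ω' = W ω)

/-- The sign (−1)^{1−X(ω)} for a {0,1}-valued variable X. -/
def sgn (X : Ω → ℝ) (ω : Ω) : ℝ := if X ω = 1 then 1 else -1

/-- Triple-robustness computation (case ii): with the true instrument propensity and
possibly misspecified treatment regression (δ*, m₀*),
E[ε* Ψ̃(W)(−1)^{1−Z}/(P(Z|W)δ*(W)) | W] = Ψ̃(W)(δ(W) − δ*(W))/δ*(W). -/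
theorem stmt14 {β : Type} [Fintype Ω]
    (p : Ω → ℝ) (hp0 : ∀ ω, 0 ≤ p ω) (hp1 : ∑ ω, p ω = 1)
    (A Z : Ω → ℝ) (W : Ω → β)
    (hA : ∀ ω, A ω = 0 ∨ A ω = 1) (hZ : ∀ ω, Z ω = 0 ∨ Z ω = 1)
    (hposW : ∀ ω, 0 < p ω → 0 < Pr p (fun ω' => W ω' = W ω))
    (hposWZ : ∀ ω, 0 < p ω → ∀ z : ℝ, z = 0 ∨ z = 1 →
      0 < Pr p (fun ω' => W ω' = W ω ∧ Z ω' = z))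
    (δ : β → ℝ)
    (hδdef : ∀ ω, 0 < p ω →
      δ (W ω) = CE p A (fun ω' => W ω' = W ω ∧ Z ω' = 1)
        - CE p A (fun ω' => W ω' = W ω ∧ Z ω' = 0))
    (δs m0s ψ : β → ℝ) (hδsne : ∀ ω, 0 < p ω → δs (W ω) ≠ 0) :
    ∀ ω, 0 < p ω →
      CE p (fun ω' => (A ω' - δs (W ω') * Z ω' - m0s (W ω'))
          * ψ (W ω') * sgn Z ω' / (PZ p W Z ω' * δs (W ω')))
        (fun ω' => W ω' = W ω)
        = ψ (W ω) * (δ (W ω) - δs (W ω)) / δs (W ω) := by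

  intro ω hω
  have hPW : 0 < Pr p (fun ω' => W ω' = W ω) := hposW ω hω
  have hS1 : 0 < Pr p (fun ω' => W ω' = W ω ∧ Z ω' = 1) := hposWZ ω hω 1 (Or.inr rfl)
  have hS0 : 0 < Pr p (fun ω' => W ω' = W ω ∧ Z ω' = 0) := hposWZ ω hω 0 (Or.inl rfl)
  have hδs := hδsne ω hω
  set w := W ω with hw
  set PW := Pr p (fun ω' => W ω' = w) with hPWdef
  set S1 := Pr p (fun ω' => W ω' = w ∧ Z ω' = 1) with hS1def
  set S0 := Pr p (fun ω' => W ω' = w ∧ Z ω' = 0) with hS0def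
  set N1 := ∑ ω', if W ω' = w ∧ Z ω' = 1 then p ω' * A ω' else 0 with hN1def
  set N0 := ∑ ω', if W ω' = w ∧ Z ω' = 0 then p ω' * A ω' else 0 with hN0def
  have hδ : δ w = N1 / S1 - N0 / S0 := by
    have h := hδdef ω hω
    rw [CE, CE] at h
    simp only [← hw] at h
    simp only [Pr] at h
    rw [h, hN1def, hN0def, hS1def, hS0def]
    simp only [Pr]
  have hS1' : (∑ ω', if W ω' = w ∧ Z ω' = 1 then p ω' else 0) = S1 := by rw [hS1def]; simp only [Pr]; exact Finset.sum_congr rfl fun x _ => by congr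
  have hS0' : (∑ ω', if W ω' = w ∧ Z ω' = 0 then p ω' else 0) = S0 := by rw [hS0def]; simp only [Pr]; exact Finset.sum_congr rfl fun x _ => by congr
  have hPZ1 : ∀ ω', W ω' = w → Z ω' = 1 → PZ p W Z ω' = S1 / PW := by
    intro ω' h1 h2
    rw [PZ]
    simp only [h1, h2]
    rfl
  have hPZ0 : ∀ ω', W ω' = w → Z ω' = 0 → PZ p W Z ω' = S0 / PW := by
    intro ω' h1 h2
    rw [PZ]
    simp only [h1, h2]
    rfl
  rw [CE]
  have key : (∑ ω', if W ω' = w then p ω' * ((A ω' - δs (W ω') * Z ω' - m0s (W ω'))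
          * ψ (W ω') * sgn Z ω' / (PZ p W Z ω' * δs (W ω'))) else 0)
      = ψ w * PW / (S1 * δs w) * N1
        - (δs w + m0s w) * (ψ w * PW / (S1 * δs w)) * S1
        - ψ w * PW / (S0 * δs w) * N0
        + m0s w * (ψ w * PW / (S0 * δs w)) * S0 := by
    rw [hN1def, hN0def, ← hS1', ← hS0', Finset.mul_sum, Finset.mul_sum,
      Finset.mul_sum, Finset.mul_sum, ← Finset.sum_sub_distrib, ← Finset.sum_sub_distrib,
      ← Finset.sum_add_distrib]
    apply Finset.sum_congr rfl
    intro ω' _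
    by_cases hWw : W ω' = w
    · rcases hZ ω' with hz | hz
      · rw [hPZ0 ω' hWw hz]
        simp only [hWw, hz, sgn]
        rw [hS1', hS0']
        norm_num
        field_simp
        ring
      · rw [hPZ1 ω' hWw hz]
        simp only [hWw, hz, sgn]
        rw [hS1', hS0']
        norm_num
        field_simp
        ring
    · simp [hWw]
  rw [key, hδ]
  rw [← hPWdef]
  field_simp
  ring
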